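/- Consider the norm ‖(x,y)‖₁ = |x| + |y| on ℝ² and the Borel set A = {0} × [0,1], which has Hausdorff dimension 1. For every t ∈ (π/4, 3π/4), the closest-point projection with respect to ‖·‖₁ of A onto the line H_{v(t)}, where v(t) = (cos t, sin t), is the singleton {(0,0)}, and hence has Hausdorff dimension 0. Consequently, the set of directions v ∈ S¹ for which dim(P_v(A)) < dim A has positive ℋ¹-measure; in particular, the Marstrand-type conclusion that dim(P_v(A)) = dim A for ℋ¹-almost every v ∈ S¹ fails for the norm ‖·‖₁. -/

import Mathlib

open Set Metric Real MeasureTheory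
open scoped ENNReal RealInnerProductSpace

noncomputable section

/-- The point `(a, b)` of the Euclidean plane. -/
def mk2 (a b : ℝ) : EuclideanSpace ℝ (Fin 2) :=
  (WithLp.equiv 2 (Fin 2 → ℝ)).symm ![a, b]

/-- The 1-norm `‖(x,y)‖₁ = |x| + |y|` on the plane. -/
def oneNorm (x : EuclideanSpace ℝ (Fin 2)) : ℝ :=
  |x 0| + |x 1|

/-- The vertical segment `A = {0} × [0,1]`. -/
def vertSegment : Set (EuclideanSpace ℝ (Fin 2)) :=
  {x : EuclideanSpace ℝ (Fin 2) | x 0 = 0 ∧ x 1 ∈ Icc (0 : ℝ) 1}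

@[simp] lemma mk2_apply0 (a b : ℝ) : mk2 a b 0 = a := rfl
@[simp] lemma mk2_apply1 (a b : ℝ) : mk2 a b 1 = b := rfl

lemma inner_mk2 (a b : ℝ) (q : EuclideanSpace ℝ (Fin 2)) :
    ⟪mk2 a b, q⟫ = a * q 0 + b * q 1 := by
  simp [PiLp.inner_apply, Fin.sum_univ_two]
  ring

lemma vertSegment_eq : vertSegment = (fun y : ℝ => mk2 0 y) '' Icc 0 1 := by
  ext x
  constructor
  · rintro ⟨h0, h1⟩
    refine ⟨x 1, h1, ?_⟩
    ext i
    fin_cases i <;> simp [h0.symm]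
  · rintro ⟨y, hy, rfl⟩
    exact ⟨rfl, hy⟩

lemma isometry_mk2 : Isometry (fun y : ℝ => mk2 0 y) := by
  apply Isometry.of_dist_eq
  intro a b
  rw [EuclideanSpace.dist_eq]
  simp [Fin.sum_univ_two, Real.sqrt_sq_eq_abs, Real.dist_eq]

lemma dimH_vertSegment : dimH vertSegment = 1 := by
  rw [vertSegment_eq, isometry_mk2.dimH_image]
  have : dimH (Icc (0:ℝ) 1) = Module.finrank ℝ ℝ :=
    Real.dimH_of_nonempty_interior (by rw [interior_Icc]; exact ⟨1/2, by norm_num, by norm_num⟩)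
  simpa using this

lemma abs_cos_lt_sin {t : ℝ} (ht : t ∈ Ioo (π / 4) (3 * π / 4)) :
    |Real.cos t| < Real.sin t := by
  obtain ⟨h1, h2⟩ := ht
  have hpi := Real.pi_pos
  have hs : Real.sqrt 2 / 2 < Real.sin t := by
    have : Real.cos |t - π / 2| < Real.cos (π / 4) → Real.cos (π/4) < Real.cos |t - π/2| ∨ True := fun _ => Or.inr trivial
    have habs : |t - π / 2| < π / 4 := abs_lt.2 ⟨by linarith, by linarith⟩
    have := Real.cos_lt_cos_of_nonneg_of_le_pi (abs_nonneg _) (by linarith) habs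
    rw [Real.cos_pi_div_four] at this
    calc Real.sqrt 2 / 2 < Real.cos |t - π / 2| := this
      _ = Real.cos (t - π / 2) := Real.cos_abs _
      _ = Real.sin t := Real.cos_sub_pi_div_two t
  have hc1 : Real.cos t < Real.sqrt 2 / 2 := by
    have := Real.cos_lt_cos_of_nonneg_of_le_pi (by positivity) (by linarith) h1
    rwa [Real.cos_pi_div_four] at this
  have hc2 : -(Real.sqrt 2 / 2) < Real.cos t := by
    have := Real.cos_lt_cos_of_nonneg_of_le_pi (by linarith) (by linarith) h2
    rw [show 3 * π / 4 = π - π/4 by ring, Real.cos_pi_sub, Real.cos_pi_div_four] at this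
    linarith
  rw [abs_lt]
  constructor <;> linarith

lemma proj_eq_zero {t : ℝ} (ht : t ∈ Ioo (π / 4) (3 * π / 4))
    (P : ℝ → EuclideanSpace ℝ (Fin 2) → EuclideanSpace ℝ (Fin 2))
    (hP : ∀ x : EuclideanSpace ℝ (Fin 2),
      ⟪mk2 (Real.cos t) (Real.sin t), P t x⟫ = 0 ∧
        ∀ q : EuclideanSpace ℝ (Fin 2), ⟪mk2 (Real.cos t) (Real.sin t), q⟫ = 0 →
          oneNorm (x - P t x) ≤ oneNorm (x - q))
    {x : EuclideanSpace ℝ (Fin 2)} (hx : x ∈ vertSegment) : P t x = 0 := by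
  obtain ⟨hx0, hy0, hy1⟩ := hx
  set y := x 1 with hy
  obtain ⟨horth, hmin⟩ := hP x
  have hle : oneNorm (x - P t x) ≤ y := by
    have := hmin 0 (by simp)
    simpa [oneNorm, hx0, ← hy, abs_of_nonneg hy0] using this
  set p := P t x with hp
  rw [inner_mk2] at horth
  have hcs := abs_cos_lt_sin ht
  have hsin : 0 < Real.sin t := lt_of_le_of_lt (abs_nonneg _) hcs
  have hsub0 : (x - p) 0 = -p 0 := by simp [hx0]
  have hsub1 : (x - p) 1 = y - p 1 := by simp [hy]
  have hone : oneNorm (x - p) = |p 0| + |y - p 1| := by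
    simp [oneNorm, hsub0, hsub1]
  have hkey : Real.sin t * |p 1| = |Real.cos t| * |p 0| := by
    have : Real.sin t * p 1 = -(Real.cos t * p 0) := by linarith
    calc Real.sin t * |p 1| = |Real.sin t * p 1| := by
          rw [abs_mul, abs_of_pos hsin]
      _ = |Real.cos t * p 0| := by rw [this, abs_neg]
      _ = |Real.cos t| * |p 0| := abs_mul _ _
  have hp0 : p 0 = 0 := by
    by_contra h
    have hpos : 0 < |p 0| := abs_pos.2 h
    have h1 : Real.sin t * |p 1| < Real.sin t * |p 0| := by
      rw [hkey]; exact mul_lt_mul_of_pos_right hcs hpos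
    have h2 : |p 1| < |p 0| := lt_of_mul_lt_mul_left h1 hsin.le
    have h3 : y - |p 1| ≤ |y - p 1| := by
      have := abs_sub_abs_le_abs_sub y (p 1)
      rw [abs_of_nonneg hy0] at this; linarith [this]
    rw [hone] at hle
    linarith
  have hp1 : p 1 = 0 := by
    rw [hp0, mul_zero, zero_add] at horth
    exact (mul_eq_zero.1 horth).resolve_left hsin.ne' 
  ext i
  fin_cases i
  · simpa using hp0
  · simpa using hp1

lemma lip0 : LipschitzWith 1 (fun x : EuclideanSpace ℝ (Fin 2) => x 0) := by
  apply LipschitzWith.of_dist_le_mul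
  intro x y
  rw [EuclideanSpace.dist_eq, Real.dist_eq, NNReal.coe_one, one_mul, ← Real.sqrt_sq_eq_abs]
  apply Real.sqrt_le_sqrt
  rw [Fin.sum_univ_two]
  have h0 : dist (x 0) (y 0) ^ 2 = (x 0 - y 0) ^ 2 := by
    rw [Real.dist_eq, sq_abs]
  rw [h0]
  have := sq_nonneg (dist (x 1) (y 1))
  linarith

lemma mk2_mem_sphere (t : ℝ) :
    mk2 (Real.cos t) (Real.sin t) ∈ sphere (0 : EuclideanSpace ℝ (Fin 2)) 1 := by
  rw [mem_sphere, dist_zero_right, EuclideanSpace.norm_eq]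
  rw [Fin.sum_univ_two]
  simp only [mk2_apply0, mk2_apply1, Real.norm_eq_abs, sq_abs]
  rw [show Real.cos t ^ 2 + Real.sin t ^ 2 = 1 from Real.cos_sq_add_sin_sq t]
  exact Real.sqrt_one

lemma arc_measure_pos {S : Set ℝ} (hS : S = Ioo (π / 4) (3 * π / 4)) :
    0 < (μH[1] : Measure (EuclideanSpace ℝ (Fin 2)))
      ((fun t : ℝ => mk2 (Real.cos t) (Real.sin t)) '' S) := by
  subst hS
  set arc := (fun t : ℝ => mk2 (Real.cos t) (Real.sin t)) '' Ioo (π / 4) (3 * π / 4)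
  have hpi := Real.pi_pos
  have hsub : Icc (0:ℝ) (1/2) ⊆ (fun x : EuclideanSpace ℝ (Fin 2) => x 0) '' arc := by
    have h1 : Icc (Real.cos (π/2)) (Real.cos (π/3)) ⊆ Real.cos '' Icc (π/3) (π/2) :=
      intermediate_value_Icc' (by linarith) (Real.continuous_cos.continuousOn)
    rw [Real.cos_pi_div_two, Real.cos_pi_div_three] at h1
    intro u hu
    obtain ⟨s, hs, rfl⟩ := h1 hu
    exact ⟨mk2 (Real.cos s) (Real.sin s),
      ⟨s, ⟨by linarith [hs.1], by linarith [hs.2]⟩, rfl⟩, rfl⟩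
  have hμle : (μH[1] : Measure ℝ) ((fun x : EuclideanSpace ℝ (Fin 2) => x 0) '' arc)
      ≤ (μH[1] : Measure (EuclideanSpace ℝ (Fin 2))) arc := by
    have := lip0.hausdorffMeasure_image_le (d := 1) zero_le_one arc
    simpa using this
  have h2 : (0:ℝ≥0∞) < (μH[1] : Measure ℝ) (Icc (0:ℝ) (1/2)) := by
    rw [MeasureTheory.hausdorffMeasure_real, Real.volume_Icc]
    norm_num
  calc (0:ℝ≥0∞) < (μH[1] : Measure ℝ) (Icc (0:ℝ) (1/2)) := h2
    _ ≤ (μH[1] : Measure ℝ) ((fun x : EuclideanSpace ℝ (Fin 2) => x 0) '' arc) :=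
        measure_mono hsub
    _ ≤ _ := hμle


/-- for the norm `‖·‖₁` and the Borel set `A = {0} × [0,1]` (of
Hausdorff dimension `1`), for every `t ∈ (π/4, 3π/4)` the closest-point
projection of `A` onto `H_{v(t)}` is the singleton `{(0,0)}`, hence of Hausdorff
dimension `0`; consequently the set of directions `v ∈ S¹` with
`dim(P_v(A)) < dim A` has positive `ℋ¹`-measure, so the Marstrand-type
conclusion `dim(P_v(A)) = dim A` for `ℋ¹`-a.e. `v ∈ S¹` fails for `‖·‖₁`. -/
theorem oneNorm_marstrand_fails
    -- `P t` is the closest-point projection (w.r.t. `‖·‖₁`) onto the line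
    -- `H_{v(t)}`, for each angle `t ∈ (π/4, 3π/4)`:
    (P : ℝ → EuclideanSpace ℝ (Fin 2) → EuclideanSpace ℝ (Fin 2))
    (hP : ∀ t ∈ Ioo (π / 4) (3 * π / 4), ∀ x : EuclideanSpace ℝ (Fin 2),
      ⟪mk2 (Real.cos t) (Real.sin t), P t x⟫ = 0 ∧
        ∀ q : EuclideanSpace ℝ (Fin 2), ⟪mk2 (Real.cos t) (Real.sin t), q⟫ = 0 →
          oneNorm (x - P t x) ≤ oneNorm (x - q)) :
    dimH vertSegment = 1 ∧
    (∀ t ∈ Ioo (π / 4) (3 * π / 4),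
      P t '' vertSegment = {0} ∧ dimH (P t '' vertSegment) = 0) ∧
    0 < (μH[1] : Measure (EuclideanSpace ℝ (Fin 2)))
        ((fun t : ℝ => mk2 (Real.cos t) (Real.sin t)) ''
          {t ∈ Ioo (π / 4) (3 * π / 4) |
            dimH (P t '' vertSegment) < dimH vertSegment}) ∧
    ¬ (∀ᵐ v ∂((μH[1] : Measure (EuclideanSpace ℝ (Fin 2))).restrict
          (sphere (0 : EuclideanSpace ℝ (Fin 2)) 1)),
        ∀ t ∈ Ioo (π / 4) (3 * π / 4), mk2 (Real.cos t) (Real.sin t) = v →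
          dimH (P t '' vertSegment) = dimH vertSegment) := by
  have hdim := dimH_vertSegment
  have hproj : ∀ t ∈ Ioo (π / 4) (3 * π / 4), P t '' vertSegment = {0} := by
    intro t ht
    apply Subset.antisymm
    · rintro _ ⟨x, hx, rfl⟩
      exact proj_eq_zero ht P (hP t ht) hx
    · intro z hz
      rw [mem_singleton_iff] at hz
      subst hz
      have hmem : mk2 0 0 ∈ vertSegment := ⟨rfl, by constructor <;> norm_num⟩
      exact ⟨mk2 0 0, hmem, proj_eq_zero ht P (hP t ht) hmem⟩
  have hdim0 : ∀ t ∈ Ioo (π / 4) (3 * π / 4), dimH (P t '' vertSegment) = 0 := by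
    intro t ht
    rw [hproj t ht]
    exact dimH_singleton 0
  have hsetEq : {t ∈ Ioo (π / 4) (3 * π / 4) |
      dimH (P t '' vertSegment) < dimH vertSegment} = Ioo (π / 4) (3 * π / 4) := by
    ext t
    simp only [mem_sep_iff, and_iff_left_iff_imp]
    intro ht
    rw [hdim0 t ht, hdim]
    norm_num
  refine ⟨hdim, fun t ht => ⟨hproj t ht, hdim0 t ht⟩, ?_, ?_⟩
  · rw [hsetEq]
    exact arc_measure_pos rfl
  · intro h
    set arc := (fun t : ℝ => mk2 (Real.cos t) (Real.sin t)) '' Ioo (π / 4) (3 * π / 4)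
      with harc
    have hbad : arc ⊆ {v | ¬ ∀ t ∈ Ioo (π / 4) (3 * π / 4),
        mk2 (Real.cos t) (Real.sin t) = v → dimH (P t '' vertSegment) = dimH vertSegment} := by
      rintro _ ⟨t, ht, rfl⟩
      intro hQ
      have := hQ t ht rfl
      rw [hdim0 t ht, hdim] at this
      norm_num at this
    have h0 := (MeasureTheory.ae_iff).1 h
    have h1 : ((μH[1] : Measure (EuclideanSpace ℝ (Fin 2))).restrict
        (sphere (0 : EuclideanSpace ℝ (Fin 2)) 1)) arc = 0 :=
      measure_mono_null hbad h0
    rw [Measure.restrict_apply' ((isClosed_sphere).measurableSet)] at h1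
    have harcsub : arc ∩ sphere (0 : EuclideanSpace ℝ (Fin 2)) 1 = arc := by
      apply inter_eq_self_of_subset_left
      rintro _ ⟨t, _, rfl⟩
      exact mk2_mem_sphere t
    rw [harcsub] at h1
    exact absurd h1 (arc_measure_pos rfl).ne'
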